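/- Let P be a full-dimensional pyramid in the pyramid decomposition process, i.e., P = cone(key) with key = {x_i} ∪ ({x_1,...,x_{i−1}} ∩ H) for some H ∈ ℋ^<(C_{i−1}, x_i), and let G be a support hyperplane of P. Then G is a support hyperplane of C_i = cone(x_1,...,x_i) that is not a support hyperplane of C_{i−1} = cone(x_1,...,x_{i−1}) if and only if: (i) x_j ∈ G^+ for all j = 1,...,i−1, and (ii) x_j ∈ G^> for all j = 1,...,i−1 with x_j ∉ P. -/

import Mathlib

open Finset

/-- Ambient space `ℝ^d`. -/
abbrev E (d : ℕ) := Fin d → ℝ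

/-- The cone generated by a set of vectors:
all finite nonnegative combinations. -/
def coneOf {d : ℕ} (s : Set (E d)) : Set (E d) :=
  {y | ∃ (t : Finset (E d)) (c : E d → ℝ),
        ↑t ⊆ s ∧ (∀ v, 0 ≤ c v) ∧ y = ∑ v ∈ t, c v • v}

/-- The cone generated by a finite family `x_1, …, x_n`:
`ℝ₊x_1 + ⋯ + ℝ₊x_n`. -/
def coneFin {d n : ℕ} (x : Fin n → E d) : Set (E d) :=
  {y | ∃ c : Fin n → ℝ, (∀ i, 0 ≤ c i) ∧ y = ∑ i, c i • x i}

/-- `σ` is visible from `x` (relative to the cone `D`) if `x ∉ D` and for every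
`y ∈ σ` the segment `[x,y]` meets `D` only in `y`. -/
def VisibleFrom {d : ℕ} (D : Set (E d)) (x : E d) (σ : Set (E d)) : Prop :=
  x ∉ D ∧ ∀ y ∈ σ, ∀ z ∈ segment ℝ x y, z ∈ D → z = y

/-- `cone(σ, x)` for a cone `σ`: all points `y + t•x`, `y ∈ σ`, `t ≥ 0`. -/
def addRay {d : ℕ} (σ : Set (E d)) (x : E d) : Set (E d) :=
  {z | ∃ y ∈ σ, ∃ t : ℝ, 0 ≤ t ∧ z = y + t • x}

/-- The lexicographic (placing) triangulation `Λ(x_1,…,x_n)`, defined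
recursively: trivial for the zero cone, and at each step the cones over the
members of the previous triangulation visible from the new generator are
added. -/
def lexTri {d : ℕ} : (n : ℕ) → (Fin n → E d) → Set (Set (E d))
  | 0, _ => {{0}}
  | n + 1, x =>
      lexTri n (fun i => x i.castSucc) ∪
      {τ | ∃ σ ∈ lexTri n (fun i => x i.castSucc),
            VisibleFrom (coneFin (fun i => x i.castSucc)) (x (Fin.last n)) σ ∧
            τ = addRay σ (x (Fin.last n))}

/-- The dimension of a subset of `ℝ^d`: the dimension of its linear span. -/
noncomputable def setDim {d : ℕ} (s : Set (E d)) : ℕ :=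
  Module.finrank ℝ (Submodule.span ℝ s)

/-- Restriction `Σ|C' = {σ ∩ C' : σ ∈ Σ, dim (σ ∩ C') = dim C'}`. -/
noncomputable def restrictTri {d : ℕ} (T : Set (Set (E d))) (s : Set (E d)) :
    Set (Set (E d)) :=
  {τ | ∃ σ ∈ T, τ = σ ∩ s ∧ setDim (σ ∩ s) = setDim s}

/-- `F` is a face of the cone `C`: either `C` itself or the intersection of
`C` with a supporting hyperplane. -/
def IsFace {d : ℕ} (C F : Set (E d)) : Prop :=
  F = C ∨ ∃ μ : (E d) →ₗ[ℝ] ℝ, (∀ y ∈ C, 0 ≤ μ y) ∧ F = C ∩ {y | μ y = 0}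

/-- A cone is pointed if it contains no nonzero linear subspace. -/
def IsPointedCone {d : ℕ} (C : Set (E d)) : Prop :=
  ∀ y, y ∈ C → -y ∈ C → y = 0

/-- `T` is a triangulation of `C` with rays through a subset of `gens`:
every member is a simplicial cone spanned by a linearly independent subset of
`gens`, the members cover `C`, and any two members intersect in a common
face. -/
def IsTriangulationOn {d : ℕ} (gens : Set (E d)) (C : Set (E d))
    (T : Set (Set (E d))) : Prop :=
  (∀ σ ∈ T, ∃ s : Finset (E d), ↑s ⊆ gens ∧
      LinearIndependent ℝ (fun v : s => (v : E d)) ∧ σ = coneOf (↑s : Set (E d))) ∧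
  ⋃₀ T = C ∧
  (∀ σ ∈ T, ∀ τ ∈ T, IsFace σ (σ ∩ τ) ∧ IsFace τ (σ ∩ τ))

/-- The linear form `μ` defines a support hyperplane (in the irredundant
representation) of the full-dimensional cone `D`, oriented with `D ⊆ {μ ≥ 0}`:
`μ` is nonnegative on `D` and cuts out a facet of `D`. -/
noncomputable def IsSuppForm {d : ℕ} (D : Set (E d)) (μ : (E d) →ₗ[ℝ] ℝ) : Prop :=
  (∀ y ∈ D, 0 ≤ μ y) ∧ setDim (D ∩ {y | μ y = 0}) = setDim D - 1

section AuxLemmas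

variable {d : ℕ}

lemma aux_mem_coneOf {s : Set (E d)} {v : E d} (hv : v ∈ s) : v ∈ coneOf s := by
  classical
  exact ⟨{v}, fun w => if w = v then 1 else 0, by simpa using hv,
    fun w => by dsimp only; split <;> norm_num, by simp⟩

lemma aux_coneOf_mono {s t : Set (E d)} (h : s ⊆ t) : coneOf s ⊆ coneOf t := by
  rintro y ⟨u, c, hus, hc, rfl⟩
  exact ⟨u, c, hus.trans h, hc, rfl⟩

lemma aux_coneOf_nonneg {s : Set (E d)} {μ : (E d) →ₗ[ℝ] ℝ}
    (h : ∀ v ∈ s, 0 ≤ μ v) : ∀ y ∈ coneOf s, 0 ≤ μ y := by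
  rintro y ⟨t, c, hts, hc, rfl⟩
  rw [map_sum]
  refine Finset.sum_nonneg fun v hv => ?_
  rw [map_smul, smul_eq_mul]
  exact mul_nonneg (hc v) (h v (hts hv))

lemma aux_coneOf_nonpos {s : Set (E d)} {μ : (E d) →ₗ[ℝ] ℝ}
    (h : ∀ v ∈ s, μ v ≤ 0) : ∀ y ∈ coneOf s, μ y ≤ 0 := by
  rintro y ⟨t, c, hts, hc, rfl⟩
  rw [map_sum]
  refine Finset.sum_nonpos fun v hv => ?_
  rw [map_smul, smul_eq_mul]
  nlinarith [hc v, h v (hts hv)]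

lemma aux_coneOf_inter_ker {s : Set (E d)} {μ : (E d) →ₗ[ℝ] ℝ}
    (h : ∀ v ∈ s, 0 ≤ μ v) :
    coneOf s ∩ {y | μ y = 0} = coneOf (s ∩ {y | μ y = 0}) := by
  classical
  ext y
  constructor
  · rintro ⟨⟨t, c, hts, hc, rfl⟩, hy0⟩
    have hsum : ∑ v ∈ t, c v * μ v = 0 := by
      simpa only [Set.mem_setOf_eq, map_sum, map_smul, smul_eq_mul] using hy0
    have hzero : ∀ v ∈ t, c v * μ v = 0 :=
      (Finset.sum_eq_zero_iff_of_nonneg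
        (fun v hv => mul_nonneg (hc v) (h v (hts hv)))).mp hsum
    refine ⟨t.filter (fun v => μ v = 0), c, ?_, hc, ?_⟩
    · intro v hv
      simp only [Finset.coe_filter, Set.mem_setOf_eq] at hv
      exact ⟨hts hv.1, hv.2⟩
    · refine (Finset.sum_filter_of_ne fun v hv hne => ?_).symm
      have hcv : c v ≠ 0 := fun h0 => hne (by rw [h0, zero_smul])
      exact (mul_eq_zero.mp (hzero v hv)).resolve_left hcv
  · rintro ⟨t, c, hts, hc, rfl⟩
    refine ⟨aux_coneOf_mono Set.inter_subset_left ⟨t, c, hts, hc, rfl⟩, ?_⟩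
    show μ _ = 0
    rw [map_sum]
    refine Finset.sum_eq_zero fun v hv => ?_
    rw [map_smul, smul_eq_mul, (hts hv).2, mul_zero]

lemma aux_span_coneOf (s : Set (E d)) :
    Submodule.span ℝ (coneOf s) = Submodule.span ℝ s := by
  apply le_antisymm
  · rw [Submodule.span_le]
    rintro y ⟨t, c, hts, hc, rfl⟩
    exact Submodule.sum_mem _ fun v hv =>
      Submodule.smul_mem _ _ (Submodule.subset_span (hts hv))
  · exact Submodule.span_mono fun v hv => aux_mem_coneOf hv

lemma aux_finrank_ker {μ : (E d) →ₗ[ℝ] ℝ} (hμ : μ ≠ 0) :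
    Module.finrank ℝ (LinearMap.ker μ) + 1 = d := by
  obtain ⟨u, hu⟩ : ∃ u, μ u ≠ 0 := by
    by_contra h; push_neg at h
    exact hμ (LinearMap.ext fun v => h v)
  have hr : LinearMap.range μ = ⊤ := by
    rw [eq_top_iff]
    rintro r -
    refine ⟨(r / μ u) • u, ?_⟩
    rw [map_smul, smul_eq_mul]
    field_simp
  have h2 := LinearMap.finrank_range_add_finrank_ker μ
  rw [hr, finrank_top, Module.finrank_self, Module.finrank_fin_fun] at h2
  omega

lemma aux_setDim_mono {s t : Set (E d)} (h : s ⊆ t) : setDim s ≤ setDim t :=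
  Submodule.finrank_mono (Submodule.span_mono h)

lemma aux_setDim_ker {s : Set (E d)} {μ : (E d) →ₗ[ℝ] ℝ} (hμ : μ ≠ 0)
    (h : ∀ y ∈ s, μ y = 0) : setDim s + 1 ≤ d := by
  have h1 : Submodule.span ℝ s ≤ LinearMap.ker μ :=
    Submodule.span_le.mpr fun y hy => LinearMap.mem_ker.mpr (h y hy)
  have h2 := Submodule.finrank_mono (R := ℝ) h1
  have h3 := aux_finrank_ker hμ
  show Module.finrank ℝ (Submodule.span ℝ s) + 1 ≤ d
  omega

end AuxLemmas
/-- Let `P = cone(key)` with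
`key = {x_i} ∪ ({x_1,…,x_{i−1}} ∩ H)` for a support hyperplane
`H ∈ ℋ^<(C_{i−1}, x_i)` (given by `ν` with `ν(x_i) < 0`), and let `G` (given
by `μ`) be a support hyperplane of `P`. Then `G` is a support hyperplane of
`C_i` that is not a support hyperplane of `C_{i−1}` if and only if:
(i) `x_j ∈ G⁺` for all `j < i`, and (ii) `x_j ∈ G^>` for all `j < i` with
`x_j ∉ P`. -/
theorem new_support_hyperplane_criterion {d n : ℕ}
    (x : Fin n → E d) (i : Fin n)
    (Cprev Ci : Set (E d))
    (hCp : Cprev = coneOf (x '' {j | j < i}))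
    (hCi : Ci = coneOf (x '' {j | j ≤ i}))
    (hfullp : setDim Cprev = d) (hfulli : setDim Ci = d)
    (ν : (E d) →ₗ[ℝ] ℝ) (hν0 : ν ≠ 0) (hν : IsSuppForm Cprev ν)
    (hvis : ν (x i) < 0)
    (P : Set (E d))
    (hP : P = coneOf ({x i} ∪ (x '' {j | j < i} ∩ {y | ν y = 0})))
    (μ : (E d) →ₗ[ℝ] ℝ) (hμ0 : μ ≠ 0) (hμ : IsSuppForm P μ) :
    (IsSuppForm Ci μ ∧ ¬ IsSuppForm Cprev μ) ↔
      ((∀ j, j < i → 0 ≤ μ (x j)) ∧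
       (∀ j, j < i → x j ∉ P → 0 < μ (x j))) := by
  classical
  unfold IsSuppForm at hμ hν ⊢
  obtain ⟨hμ1, hμ2⟩ := hμ
  obtain ⟨hν1, hν2⟩ := hν
  have hνxi : ν (x i) ≠ 0 := ne_of_lt hvis
  have hxiP : x i ∈ P := by
    rw [hP]; exact aux_mem_coneOf (Set.mem_union_left _ rfl)
  have hgensCp : ∀ j : Fin n, j < i → x j ∈ Cprev := fun j hj => by
    rw [hCp]; exact aux_mem_coneOf ⟨j, hj, rfl⟩
  have hgensCi : ∀ j : Fin n, j ≤ i → x j ∈ Ci := fun j hj => by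
    rw [hCi]; exact aux_mem_coneOf ⟨j, hj, rfl⟩
  have hPCi : P ⊆ Ci := by
    rw [hP, hCi]
    apply aux_coneOf_mono
    rintro v (rfl | ⟨⟨j, hj, rfl⟩, -⟩)
    exacts [⟨i, Set.mem_setOf_eq ▸ le_refl i, rfl⟩, ⟨j, Set.mem_setOf_eq ▸ le_of_lt hj, rfl⟩]
  have hCpCi : Cprev ⊆ Ci := by
    rw [hCp, hCi]
    exact aux_coneOf_mono (Set.image_mono fun j hj => Set.mem_setOf_eq ▸ le_of_lt hj)
  have hνP : ∀ y ∈ P, ν y ≤ 0 := by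
    rw [hP]
    apply aux_coneOf_nonpos
    rintro v (rfl | ⟨-, hv⟩)
    · exact le_of_lt hvis
    · exact le_of_eq hv
  have hνgens : ∀ v ∈ x '' {j | j < i}, 0 ≤ ν v := fun v hv =>
    hν1 v (by rw [hCp]; exact aux_mem_coneOf hv)
  have hF : Cprev ∩ {y | ν y = 0} = coneOf (x '' {j | j < i} ∩ {y | ν y = 0}) := by
    rw [hCp]; exact aux_coneOf_inter_ker hνgens
  have hspanP : Submodule.span ℝ P = ⊤ := by
    have hV : Submodule.span ℝ (x '' {j | j < i} ∩ {y | ν y = 0}) = LinearMap.ker ν := by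
      apply Submodule.eq_of_le_of_finrank_le
      · rw [Submodule.span_le]
        rintro v ⟨-, hv⟩
        exact LinearMap.mem_ker.mpr hv
      · have e1 : setDim (Cprev ∩ {y | ν y = 0}) =
            Module.finrank ℝ (Submodule.span ℝ (x '' {j | j < i} ∩ {y | ν y = 0})) := by
          rw [hF]
          unfold setDim
          rw [aux_span_coneOf]
        have e2 := aux_finrank_ker hν0
        rw [hν2, hfullp] at e1
        omega
    rw [hP, aux_span_coneOf, Submodule.span_union, hV, eq_top_iff]
    rintro y -
    rw [Submodule.mem_sup]
    refine ⟨(ν y / ν (x i)) • x i,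
      Submodule.smul_mem _ _ (Submodule.subset_span (Set.mem_singleton _)),
      y - (ν y / ν (x i)) • x i, ?_, by abel⟩
    rw [LinearMap.mem_ker, map_sub, map_smul, smul_eq_mul]
    field_simp
    ring
  have hdP : setDim P = d := by
    unfold setDim
    rw [hspanP, finrank_top, Module.finrank_fin_fun]
  have hPGdim : setDim (P ∩ {y | μ y = 0}) = d - 1 := by rw [hμ2, hdP]
  have hdμ := aux_finrank_ker hμ0
  have hμgenP : ∀ v ∈ ({x i} ∪ (x '' {j | j < i} ∩ {y | ν y = 0})), 0 ≤ μ v :=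
    fun v hv => hμ1 v (by rw [hP]; exact aux_mem_coneOf hv)
  constructor
  · rintro ⟨⟨hμCi, hμCi2⟩, hCpN⟩
    have hi : ∀ j, j < i → 0 ≤ μ (x j) := fun j hj => hμCi _ (hgensCi j (le_of_lt hj))
    have hμCp : ∀ y ∈ Cprev, 0 ≤ μ y := fun y hy => hμCi y (hCpCi hy)
    have hμgi : ∀ v ∈ x '' {j | j ≤ i}, 0 ≤ μ v := by
      rintro v ⟨j, hj, rfl⟩
      exact hμCi _ (hgensCi j hj)
    have hμgp : ∀ v ∈ x '' {j | j < i}, 0 ≤ μ v := by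
      rintro v ⟨j, hj, rfl⟩
      exact hi j hj
    refine ⟨hi, ?_⟩
    have hμxi : μ (x i) = 0 := by
      by_contra hne
      have hpos : 0 < μ (x i) := lt_of_le_of_ne (hμ1 _ hxiP) (Ne.symm hne)
      have heq : Ci ∩ {y | μ y = 0} = Cprev ∩ {y | μ y = 0} := by
        apply Set.Subset.antisymm
        · rw [hCi, hCp, aux_coneOf_inter_ker hμgi, aux_coneOf_inter_ker hμgp]
          apply aux_coneOf_mono
          rintro v ⟨⟨j, hj, rfl⟩, hv0⟩
          refine ⟨⟨j, ?_, rfl⟩, hv0⟩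
          rcases lt_or_eq_of_le (show j ≤ i from hj) with h | h
          · exact h
          · exfalso
            subst h
            exact absurd hv0 (ne_of_gt hpos)
        · exact Set.inter_subset_inter hCpCi subset_rfl
      exact hCpN ⟨hμCp, by rw [← heq, hμCi2, hfulli, hfullp]⟩
    intro j hj hjP
    rcases lt_or_eq_of_le (hi j hj) with h | h
    · exact h
    exfalso
    have hμxj : μ (x j) = 0 := h.symm
    set S : Set (E d) := x '' {j | j < i} ∩ {y | ν y = 0} ∩ {y | μ y = 0} with hSdef
    have hPG : P ∩ {y | μ y = 0} ⊆ coneOf ({x i} ∪ S) := by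
      rw [hP, aux_coneOf_inter_ker hμgenP]
      apply aux_coneOf_mono
      rintro v ⟨(rfl | hv), hv0⟩
      · exact Or.inl rfl
      · exact Or.inr ⟨hv, hv0⟩
    have hdimS : d - 2 ≤ Module.finrank ℝ (Submodule.span ℝ S) := by
      have h1 : setDim (P ∩ {y | μ y = 0}) ≤
          Module.finrank ℝ (Submodule.span ℝ ({x i} ∪ S)) := by
        refine Submodule.finrank_mono ?_
        calc Submodule.span ℝ (P ∩ {y | μ y = 0})
            ≤ Submodule.span ℝ (coneOf ({x i} ∪ S)) := Submodule.span_mono hPG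
          _ = Submodule.span ℝ ({x i} ∪ S) := aux_span_coneOf _
      have h2 : Module.finrank ℝ (Submodule.span ℝ ({x i} ∪ S)) ≤
          1 + Module.finrank ℝ (Submodule.span ℝ S) := by
        rw [Submodule.span_union]
        have h3 := Submodule.finrank_sup_add_finrank_inf_eq
          (Submodule.span ℝ ({x i} : Set (E d))) (Submodule.span ℝ S)
        have h4 : Module.finrank ℝ (Submodule.span ℝ ({x i} : Set (E d))) ≤ 1 :=
          (finrank_span_le_card _).trans (by simp)
        omega
      rw [hPGdim] at h1
      omega
    have hCpG_ub : setDim (Cprev ∩ {y | μ y = 0}) + 1 ≤ d :=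
      aux_setDim_ker hμ0 fun y hy => hy.2
    have hCpG_ne : setDim (Cprev ∩ {y | μ y = 0}) ≠ d - 1 := fun hcon =>
      hCpN ⟨hμCp, by rw [hcon, hfullp]⟩
    have hSsub : S ⊆ Cprev ∩ {y | μ y = 0} := by
      rintro v ⟨⟨hv1, -⟩, hv2⟩
      exact ⟨by rw [hCp]; exact aux_mem_coneOf hv1, hv2⟩
    have hspanle : Submodule.span ℝ S ≤ Submodule.span ℝ (Cprev ∩ {y | μ y = 0}) :=
      Submodule.span_mono hSsub
    have heqspan : Submodule.span ℝ S = Submodule.span ℝ (Cprev ∩ {y | μ y = 0}) := by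
      apply Submodule.eq_of_le_of_finrank_le hspanle
      have h5 : setDim (Cprev ∩ {y | μ y = 0}) ≤
          Module.finrank ℝ (Submodule.span ℝ S) := by omega
      exact h5
    have hxjmem : x j ∈ Submodule.span ℝ S := by
      rw [heqspan]
      exact Submodule.subset_span ⟨hgensCp j hj, hμxj⟩
    have hνxj : ν (x j) = 0 := by
      have hker : Submodule.span ℝ S ≤ LinearMap.ker ν :=
        Submodule.span_le.mpr fun v hv => LinearMap.mem_ker.mpr hv.1.2
      exact LinearMap.mem_ker.mp (hker hxjmem)
    exact hjP (by rw [hP]; exact aux_mem_coneOf (Or.inr ⟨⟨j, hj, rfl⟩, hνxj⟩))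
  · rintro ⟨h1, h2⟩
    have hμgp : ∀ v ∈ x '' {j | j < i}, 0 ≤ μ v := by
      rintro v ⟨j, hj, rfl⟩
      exact h1 j hj
    have hμgi : ∀ v ∈ x '' {j | j ≤ i}, 0 ≤ μ v := by
      rintro v ⟨j, hj, rfl⟩
      rcases lt_or_eq_of_le (show j ≤ i from hj) with h | h
      · exact h1 j h
      · subst h; exact hμ1 _ hxiP
    have hμCi : ∀ y ∈ Ci, 0 ≤ μ y := by rw [hCi]; exact aux_coneOf_nonneg hμgi
    have hμCp : ∀ y ∈ Cprev, 0 ≤ μ y := fun y hy => hμCi y (hCpCi hy)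
    constructor
    · refine ⟨hμCi, ?_⟩
      have hub : setDim (Ci ∩ {y | μ y = 0}) + 1 ≤ d :=
        aux_setDim_ker hμ0 fun y hy => hy.2
      have hlb : d - 1 ≤ setDim (Ci ∩ {y | μ y = 0}) := by
        rw [← hPGdim]
        exact aux_setDim_mono (Set.inter_subset_inter hPCi subset_rfl)
      rw [hfulli]
      omega
    · rintro ⟨-, hS2⟩
      have hdimC : setDim (Cprev ∩ {y | μ y = 0}) = d - 1 := by rw [hS2, hfullp]
      have hsub : ∀ y ∈ Cprev ∩ {y | μ y = 0}, μ y = 0 ∧ ν y = 0 := by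
        rintro y ⟨hyC, hy0⟩
        refine ⟨hy0, ?_⟩
        rw [hCp] at hyC
        obtain ⟨t, c, hts, hc, rfl⟩ := hyC
        have hy0' : ∑ v ∈ t, c v * μ v = 0 := by
          simpa only [Set.mem_setOf_eq, map_sum, map_smul, smul_eq_mul] using hy0
        have hzero := (Finset.sum_eq_zero_iff_of_nonneg
          (fun v hv => mul_nonneg (hc v) (hμgp v (hts hv)))).mp hy0'
        rw [map_sum]
        refine Finset.sum_eq_zero fun v hv => ?_
        rw [map_smul, smul_eq_mul]
        rcases eq_or_ne (c v) 0 with hcv | hcv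
        · rw [hcv, zero_mul]
        · have hμv : μ v = 0 := (mul_eq_zero.mp (hzero v hv)).resolve_left hcv
          obtain ⟨j, hj, rfl⟩ := hts hv
          have hxP : x j ∈ P := by
            by_contra hnp
            exact absurd hμv (ne_of_gt (h2 j hj hnp))
          have hνv : ν (x j) = 0 :=
            le_antisymm (hνP _ hxP) (hνgens _ ⟨j, hj, rfl⟩)
          rw [hνv, mul_zero]
      have hkerμ : Submodule.span ℝ (Cprev ∩ {y | μ y = 0}) = LinearMap.ker μ := by
        apply Submodule.eq_of_le_of_finrank_le
        · exact Submodule.span_le.mpr fun y hy => LinearMap.mem_ker.mpr (hsub y hy).1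
        · show Module.finrank ℝ (LinearMap.ker μ) ≤ setDim (Cprev ∩ {y | μ y = 0})
          omega
      have hdν := aux_finrank_ker hν0
      have hkerν : Submodule.span ℝ (Cprev ∩ {y | μ y = 0}) = LinearMap.ker ν := by
        apply Submodule.eq_of_le_of_finrank_le
        · exact Submodule.span_le.mpr fun y hy => LinearMap.mem_ker.mpr (hsub y hy).2
        · show Module.finrank ℝ (LinearMap.ker ν) ≤ setDim (Cprev ∩ {y | μ y = 0})
          omega
      have hkk : LinearMap.ker μ = LinearMap.ker ν := by rw [← hkerμ, ← hkerν]
      obtain ⟨u, hu⟩ : ∃ u, μ u ≠ 0 := by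
        by_contra h; push_neg at h
        exact hμ0 (LinearMap.ext fun v => h v)
      have hscal : ∀ y, μ u * ν y = ν u * μ y := by
        intro y
        have hmem : y - (μ y / μ u) • u ∈ LinearMap.ker μ := by
          rw [LinearMap.mem_ker, map_sub, map_smul, smul_eq_mul]
          field_simp
          ring
        rw [hkk, LinearMap.mem_ker, map_sub, map_smul, smul_eq_mul, sub_eq_zero] at hmem
        rw [hmem]
        field_simp
      have hμxi_pos : 0 < μ (x i) := by
        rcases lt_or_eq_of_le (hμ1 _ hxiP) with h | h
        · exact h
        · exfalso
          have e2 := hscal (x i)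
          rw [← h, mul_zero] at e2
          rcases mul_eq_zero.mp e2 with h' | h'
          exacts [hu h', hνxi h']
      have hCpker : ∀ y ∈ Cprev, μ y = 0 := by
        intro y hy
        have e1 := hscal y
        have e2 := hscal (x i)
        have hμy := hμCp y hy
        have hνy := hν1 y hy
        have hle : μ y ≤ 0 := by
          rcases hu.lt_or_gt with hc | hc
          · have hνu : 0 < ν u := by nlinarith [mul_pos_of_neg_of_neg hc hvis]
            nlinarith [e1, hνu, hνy, hc]
          · have hνu : ν u < 0 := by nlinarith [mul_neg_of_pos_of_neg hc hvis]
            nlinarith [e1, hνu, hνy, hc]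
        linarith
      have hfin : setDim Cprev + 1 ≤ d := aux_setDim_ker hμ0 hCpker
      rw [hfullp] at hfin
      omega
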